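/- Let a, b, c, u ∈ ℂ with c+u and c+u−1 not nonpositive integers. Let G(x) := (1−x)^{a+u}·F(a+u, b+u; c+u; x), where (1−x)^{a+u} is the principal branch (well defined since Re(1−x) > 0 for |x| < 1). Then for every complex x with |x| < 1: x·G′(x) + (−(b−c)/(1−x) + b − 1 + u)·G(x) = (c+u−1)·(1−x)^{a+u−1}·F(a+u−1, b+u−1; c+u−1; x). -/

import Mathlib

open Filter Finset FormalMultilinearSeries

/-- The Gauss hypergeometric series F(a,b;c;x) = ∑ (a)ₖ(b)ₖ/((c)ₖ k!) xᵏ. -/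
noncomputable def gauss2F1 (a b c x : ℂ) : ℂ :=
  ∑' k : ℕ, ((ascPochhammer ℂ k).eval a * (ascPochhammer ℂ k).eval b)
    / ((ascPochhammer ℂ k).eval c * (Nat.factorial k : ℂ)) * x ^ k

namespace Stmt14

noncomputable def coeff (A B C : ℂ) (k : ℕ) : ℂ :=
  ((ascPochhammer ℂ k).eval A * (ascPochhammer ℂ k).eval B)
    / ((ascPochhammer ℂ k).eval C * (Nat.factorial k : ℂ))

lemma gauss_eq (A B C x : ℂ) : gauss2F1 A B C x = ∑' k, coeff A B C k * x ^ k := rfl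

lemma natc_ne (n : ℕ) : ((n : ℂ) + 1) ≠ 0 := by
  have : (((n + 1 : ℕ)) : ℂ) ≠ 0 := Nat.cast_ne_zero.2 (Nat.succ_ne_zero n)
  push_cast at this; exact this

lemma poch_ne_zero {C : ℂ} (hC : ∀ n : ℕ, C + n ≠ 0) (k : ℕ) :
    (ascPochhammer ℂ k).eval C ≠ 0 := by
  induction k with
  | zero => simp
  | succ n ih => rw [ascPochhammer_succ_eval]; exact mul_ne_zero ih (hC n)

lemma coeff_succ {A B C : ℂ} (hC : ∀ n : ℕ, C + n ≠ 0) (n : ℕ) :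
    coeff A B C (n + 1)
      = coeff A B C n * ((A + n) * (B + n) / ((C + n) * ((n : ℂ) + 1))) := by
  have h1 := poch_ne_zero hC n
  have h2 := hC n
  have h3 : ((Nat.factorial n : ℂ)) ≠ 0 := Nat.cast_ne_zero.2 (Nat.factorial_ne_zero n)
  have h4 := natc_ne n
  simp only [coeff, ascPochhammer_succ_eval, Nat.factorial_succ]
  push_cast
  field_simp

lemma poch_succ_left_eval (z : ℂ) (n : ℕ) :
    (ascPochhammer ℂ (n + 1)).eval z = z * (ascPochhammer ℂ n).eval (z + 1) := by
  rw [ascPochhammer_succ_left]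
  simp [Polynomial.eval_comp]

lemma coeff_zero (A B C : ℂ) : coeff A B C 0 = 1 := by
  simp [coeff]

lemma coeff_shift {A B C : ℂ} (hC : ∀ n : ℕ, C + n ≠ 0) (hC1 : C - 1 ≠ 0) (n : ℕ) :
    coeff (A - 1) (B - 1) (C - 1) (n + 1)
      = (A - 1) * (B - 1) / ((C - 1) * ((n : ℂ) + 1)) * coeff A B C n := by
  have h1 := poch_ne_zero hC n
  have h3 : ((Nat.factorial n : ℂ)) ≠ 0 := Nat.cast_ne_zero.2 (Nat.factorial_ne_zero n)
  have h4 := natc_ne n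
  have eA : A - 1 + 1 = A := by ring
  have eB : B - 1 + 1 = B := by ring
  have eC : C - 1 + 1 = C := by ring
  rw [coeff, coeff, poch_succ_left_eval, poch_succ_left_eval, poch_succ_left_eval,
    eA, eB, eC, Nat.factorial_succ]
  push_cast
  field_simp

lemma coeff_key {A B C : ℂ} (hC : ∀ n : ℕ, C + n ≠ 0) (hC1 : C - 1 ≠ 0) (n : ℕ) :
    ((n : ℂ) + C) * coeff A B C (n + 1) - ((n : ℂ) + A + B - 1) * coeff A B C n
      = (C - 1) * coeff (A - 1) (B - 1) (C - 1) (n + 1) := by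
  have h2 := hC n
  have h4 := natc_ne n
  rw [coeff_shift hC hC1, coeff_succ hC]
  field_simp
  ring

lemma tendsto_aux (z : ℂ) :
    Tendsto (fun n : ℕ => (z + n) / ((n : ℂ) + 1)) atTop (nhds 1) := by
  have h0 : Tendsto (fun n : ℕ => (1 : ℂ) / ((n : ℂ) + 1)) atTop (nhds 0) := by
    rw [tendsto_zero_iff_norm_tendsto_zero]
    have : Tendsto (fun n : ℕ => 1 / ((n : ℝ) + 1)) atTop (nhds 0) :=
      tendsto_one_div_add_atTop_nhds_zero_nat
    refine this.congr fun n => ?_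
    rw [norm_div, norm_one]
    congr 1
    rw [show ((n : ℂ) + 1) = ((n + 1 : ℕ) : ℂ) by push_cast; ring]
    rw [Complex.norm_natCast]
    push_cast; ring
  have h1 : Tendsto (fun n : ℕ => 1 + (z - 1) * ((1 : ℂ) / ((n : ℂ) + 1))) atTop
      (nhds (1 + (z - 1) * 0)) :=
    tendsto_const_nhds.add (tendsto_const_nhds.mul h0)
  rw [show (1 : ℂ) + (z - 1) * 0 = 1 by ring] at h1
  refine h1.congr fun n => ?_
  have h4 := natc_ne n
  field_simp
  ring

lemma tendsto_ratio {A B C : ℂ} (hC : ∀ n : ℕ, C + n ≠ 0) :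
    Tendsto (fun n : ℕ => ‖(A + n) * (B + n) / ((C + n) * ((n : ℂ) + 1))‖) atTop (nhds 1) := by
  have h : Tendsto (fun n : ℕ => ((A + n) / ((n : ℂ) + 1)) * ((B + n) / ((n : ℂ) + 1))
      / ((C + n) / ((n : ℂ) + 1))) atTop (nhds (1 * 1 / 1)) :=
    ((tendsto_aux A).mul (tendsto_aux B)).div (tendsto_aux C) one_ne_zero
  rw [show (1 : ℂ) * 1 / 1 = 1 by norm_num] at h
  have h2 : Tendsto (fun n : ℕ => (A + n) * (B + n) / ((C + n) * ((n : ℂ) + 1))) atTop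
      (nhds 1) := by
    refine h.congr fun n => ?_
    have h4 := natc_ne n
    have h5 := hC n
    rw [div_mul_div_comm, div_div_div_eq,
      div_eq_div_iff (mul_ne_zero (mul_ne_zero h4 h4) h5) (mul_ne_zero h5 h4)]
    ring
  simpa using h2.norm

lemma summable_coeff_norm {A B C : ℂ} (hC : ∀ n : ℕ, C + n ≠ 0) {r : ℝ}
    (h0 : 0 ≤ r) (h1 : r < 1) :
    Summable (fun n : ℕ => ‖coeff A B C n‖ * r ^ n) := by
  refine summable_of_ratio_norm_eventually_le (r := (r + 1) / 2) (by linarith) ?_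
  have hev : ∀ᶠ n : ℕ in atTop,
      ‖(A + n) * (B + n) / ((C + n) * ((n : ℂ) + 1))‖ * r ≤ (r + 1) / 2 := by
    have := ((tendsto_ratio (A := A) (B := B) hC).mul_const r).eventually_le_const
      (show 1 * r < (r + 1) / 2 by linarith)
    simpa using this
  filter_upwards [hev] with n hn
  have hnn : 0 ≤ ‖coeff A B C n‖ * r ^ n := by positivity
  rw [Real.norm_of_nonneg (by positivity), Real.norm_of_nonneg hnn,
    coeff_succ hC n, norm_mul, pow_succ]
  calc ‖coeff A B C n‖ * ‖(A + n) * (B + n) / ((C + n) * ((n : ℂ) + 1))‖ * (r ^ n * r)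
      = (‖(A + n) * (B + n) / ((C + n) * ((n : ℂ) + 1))‖ * r) * (‖coeff A B C n‖ * r ^ n) := by
        ring
    _ ≤ (r + 1) / 2 * (‖coeff A B C n‖ * r ^ n) :=
        mul_le_mul_of_nonneg_right hn hnn

lemma hasSum_gauss {A B C : ℂ} (hC : ∀ n : ℕ, C + n ≠ 0) {x : ℂ} (hx : ‖x‖ < 1) :
    HasSum (fun n : ℕ => coeff A B C n * x ^ n) (gauss2F1 A B C x) := by
  have hs : Summable (fun n : ℕ => coeff A B C n * x ^ n) := by
    refine Summable.of_norm ?_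
    have := summable_coeff_norm (A := A) (B := B) hC (norm_nonneg x) hx
    refine this.congr fun n => ?_
    rw [norm_mul, norm_pow]
  rw [gauss_eq]
  exact hs.hasSum

noncomputable def series (A B C : ℂ) : FormalMultilinearSeries ℂ ℂ ℂ :=
  ofScalars ℂ (coeff A B C)

lemma hasFPS {A B C : ℂ} (hC : ∀ n : ℕ, C + n ≠ 0) :
    HasFPowerSeriesOnBall (gauss2F1 A B C) (series A B C) 0 1 := by
  constructor
  · refine ENNReal.le_of_forall_nnreal_lt fun r hr => ?_
    refine FormalMultilinearSeries.le_radius_of_summable_norm _ ?_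
    have hr1 : (r : ℝ) < 1 := by exact_mod_cast hr
    have := summable_coeff_norm (A := A) (B := B) hC r.coe_nonneg hr1
    refine this.congr fun n => ?_
    rw [series, ofScalars_norm]
  · exact one_pos
  · intro y hy
    rw [Metric.mem_eball, edist_zero_right, ← ofReal_norm, ENNReal.ofReal_lt_one] at hy
    have hy' : ‖y‖ < 1 := by exact_mod_cast hy
    have h := hasSum_gauss (A := A) (B := B) hC hy'
    rw [zero_add]
    have hfun : (fun n : ℕ => (series A B C n) fun _ => y)
        = fun n : ℕ => coeff A B C n * y ^ n := by
      funext n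
      rw [series, ofScalars_apply_eq, smul_eq_mul]
    rw [hfun]
    exact h

lemma main_series {A B C : ℂ} (hC : ∀ n : ℕ, C + n ≠ 0) (hC1 : ∀ n : ℕ, C - 1 + n ≠ 0)
    {x : ℂ} (hx : ‖x‖ < 1) :
    (1 - x) * (x * deriv (gauss2F1 A B C) x) + (C - 1 - (A + B - 1) * x) * gauss2F1 A B C x
      = (C - 1) * gauss2F1 (A - 1) (B - 1) (C - 1) x := by
  have hC1'' : C - 1 ≠ 0 := by simpa using hC1 0
  set F := gauss2F1 A B C with hF
  have hball := hasFPS (A := A) (B := B) hC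
  have hmem : x ∈ Metric.eball (0 : ℂ) 1 := by
    rw [Metric.mem_eball, edist_zero_right, ← ofReal_norm, ENNReal.ofReal_lt_one]
    exact_mod_cast hx
  -- sum for W := x * deriv F x
  have h1 := (hball.fderiv).hasSum hmem
  have h2 := (ContinuousLinearMap.apply ℂ ℂ x).hasSum h1
  simp only [ContinuousLinearMap.apply_apply] at h2
  have hv : (fderiv ℂ F (0 + x)) x = x * deriv F x := by
    rw [zero_add]
    have e0 : (fderiv ℂ F x) x = (fderiv ℂ F x) (x • (1 : ℂ)) := by norm_num
    rw [e0, map_smul, fderiv_apply_one_eq_deriv, smul_eq_mul]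
  rw [hv] at h2
  have hfun1 : (fun n : ℕ => ((series A B C).derivSeries n fun _ => x) x)
      = fun n : ℕ => ((n : ℂ) + 1) * coeff A B C (n + 1) * x ^ (n + 1) := by
    funext n
    rw [derivSeries_apply_diag, series, ofScalars_apply_eq, smul_eq_mul, nsmul_eq_mul]
    push_cast
    ring
  rw [hfun1] at h2
  have hFsum : HasSum (fun n : ℕ => coeff A B C n * x ^ n) (F x) := hasSum_gauss hC hx
  have hGsum : HasSum (fun n : ℕ => coeff (A - 1) (B - 1) (C - 1) n * x ^ n)
      (gauss2F1 (A - 1) (B - 1) (C - 1) x) := hasSum_gauss hC1 hx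
  -- unshifted derivative sum
  have h2' : HasSum (fun n : ℕ => (n : ℂ) * coeff A B C n * x ^ n) (x * deriv F x) := by
    have e : (fun n : ℕ => ((n : ℂ) + 1) * coeff A B C (n + 1) * x ^ (n + 1))
        = fun n : ℕ => (fun m : ℕ => (m : ℂ) * coeff A B C m * x ^ m) (n + 1) := by
      funext n; push_cast; ring
    rw [e] at h2
    have h3 := (hasSum_nat_add_iff (f := fun m : ℕ => (m : ℂ) * coeff A B C m * x ^ m) 1).1 h2
    simpa using h3
  -- shifted (C-1)·F sum
  have hshiftF : HasSum (fun n : ℕ => (C - 1) * (coeff A B C (n + 1) * x ^ (n + 1)))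
      ((C - 1) * F x - (C - 1)) := by
    have h := hFsum.mul_left (C - 1)
    have h' := (hasSum_nat_add_iff'
      (f := fun n : ℕ => (C - 1) * (coeff A B C n * x ^ n)) 1).2 h
    simpa [coeff_zero] using h'
  -- shifted (C-1)·G sum
  have hshiftG : HasSum (fun n : ℕ =>
      (C - 1) * (coeff (A - 1) (B - 1) (C - 1) (n + 1) * x ^ (n + 1)))
      ((C - 1) * gauss2F1 (A - 1) (B - 1) (C - 1) x - (C - 1)) := by
    have h := hGsum.mul_left (C - 1)
    have h' := (hasSum_nat_add_iff'
      (f := fun n : ℕ => (C - 1) * (coeff (A - 1) (B - 1) (C - 1) n * x ^ n)) 1).2 h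
    simpa [coeff_zero] using h'
  -- combine
  have hL := (h2.add hshiftF).sub ((h2'.add (hFsum.mul_left (A + B - 1))).mul_left x)
  have hfun2 : (fun n : ℕ =>
      (((n : ℂ) + 1) * coeff A B C (n + 1) * x ^ (n + 1)
        + (C - 1) * (coeff A B C (n + 1) * x ^ (n + 1)))
      - x * ((n : ℂ) * coeff A B C n * x ^ n + (A + B - 1) * (coeff A B C n * x ^ n)))
      = fun n : ℕ =>
        (C - 1) * (coeff (A - 1) (B - 1) (C - 1) (n + 1) * x ^ (n + 1)) := by
    funext n
    have hkey := coeff_key (A := A) (B := B) hC hC1'' n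
    have hxp : x * x ^ n = x ^ (n + 1) := (pow_succ x n).symm ▸ (mul_comm x (x ^ n)) ▸ rfl
    calc (((n : ℂ) + 1) * coeff A B C (n + 1) * x ^ (n + 1)
        + (C - 1) * (coeff A B C (n + 1) * x ^ (n + 1)))
        - x * ((n : ℂ) * coeff A B C n * x ^ n + (A + B - 1) * (coeff A B C n * x ^ n))
        = (((n : ℂ) + C) * coeff A B C (n + 1)
            - ((n : ℂ) + A + B - 1) * coeff A B C n) * x ^ (n + 1) := by
          rw [pow_succ]; ring
      _ = (C - 1) * (coeff (A - 1) (B - 1) (C - 1) (n + 1) * x ^ (n + 1)) := by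
          rw [hkey]; ring
  rw [hfun2] at hL
  have huniq := hL.unique hshiftG
  -- huniq : (W + ((C-1)F - (C-1))) - x * (W + (A+B-1)F) = (C-1)G - (C-1)
  linear_combination huniq

end Stmt14

open Stmt14 in
theorem stmt_14 (a b c u : ℂ)
    (hc : ∀ n : ℕ, c + u ≠ -(n : ℂ)) (hc' : ∀ n : ℕ, c + u - 1 ≠ -(n : ℂ)) :
    ∀ x : ℂ, ‖x‖ < 1 →
      x * deriv (fun y => (1 - y) ^ (a + u) * gauss2F1 (a + u) (b + u) (c + u) y) x
        + (-((b - c) / (1 - x)) + b - 1 + u)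
          * ((1 - x) ^ (a + u) * gauss2F1 (a + u) (b + u) (c + u) x)
      = (c + u - 1) * (1 - x) ^ (a + u - 1)
          * gauss2F1 (a + u - 1) (b + u - 1) (c + u - 1) x := by
  intro x hx
  have hC : ∀ n : ℕ, (c + u) + n ≠ 0 := fun n h => hc n (by linear_combination h)
  have hC1 : ∀ n : ℕ, (c + u) - 1 + n ≠ 0 := fun n h => hc' n (by linear_combination h)
  have h1x : (1 : ℂ) - x ≠ 0 := by
    rw [sub_ne_zero]
    intro h
    rw [← h] at hx
    norm_num at hx
  have hre : 0 < (1 - x).re := by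
    have h1 : x.re < 1 := by
      have h2 : |x.re| ≤ ‖x‖ := Complex.abs_re_le_norm x
      calc x.re ≤ |x.re| := le_abs_self _
        _ ≤ ‖x‖ := h2
        _ < 1 := hx
    simp only [Complex.sub_re, Complex.one_re]
    linarith
  have hslit : (1 - x) ∈ Complex.slitPlane := Or.inl hre
  -- differentiability
  have hball := hasFPS (A := a + u) (B := b + u) hC
  have hmem : x ∈ Metric.eball (0 : ℂ) 1 := by
    rw [Metric.mem_eball, edist_zero_right, ← ofReal_norm, ENNReal.ofReal_lt_one]
    exact_mod_cast hx
  have hdF : HasDerivAt (gauss2F1 (a + u) (b + u) (c + u))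
      (deriv (gauss2F1 (a + u) (b + u) (c + u)) x) x :=
    (hball.differentiableOn x hmem).differentiableAt
      (Metric.isOpen_eball.mem_nhds hmem) |>.hasDerivAt
  have hd0 : HasDerivAt (fun y : ℂ => 1 - y) (-1) x := (hasDerivAt_id x).const_sub 1
  have hd1 : HasDerivAt (fun y : ℂ => (1 - y) ^ (a + u))
      ((a + u) * (1 - x) ^ (a + u - 1) * (-1)) x := hd0.cpow_const hslit
  have hdG : HasDerivAt (fun y => (1 - y) ^ (a + u) * gauss2F1 (a + u) (b + u) (c + u) y) _ x :=
    hd1.mul hdF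
  rw [hdG.deriv]
  have hpow : (1 - x) ^ (a + u) = (1 - x) ^ (a + u - 1) * (1 - x) := by
    conv_lhs => rw [show a + u = (a + u - 1) + 1 by ring]
    rw [Complex.cpow_add _ _ h1x, Complex.cpow_one]
  rw [hpow]
  have key := main_series (A := a + u) (B := b + u) (C := c + u) hC hC1 hx
  have hdiv : -((b - c) / (1 - x)) * ((1 - x) ^ (a + u - 1) * (1 - x)
        * gauss2F1 (a + u) (b + u) (c + u) x)
      = -(b - c) * ((1 - x) ^ (a + u - 1) * gauss2F1 (a + u) (b + u) (c + u) x) := by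
    field_simp
  linear_combination (1 - x) ^ (a + u - 1) * key + hdiv
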